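/- Assume in addition that g is locally Hölder continuous of some order β ∈ (0, H). Let (α, β') be a connected component of the open set {t > 0 : X_t > 0} with α > 0 (so that X_α = 0) and β' < ∞ (so that X_{β'} = 0). Then lim_{t↓α} X_t = 0 = X_α and lim_{t↑β'} X_t = 0 = X_{β'}. -/

import Mathlib

open MeasureTheory Filter Set

/-- `X` is a continuous solution on `[0,T]` of the ε-approximating equation
`X_t = X₀ + a ∫₀ᵗ (s+ε)^{2H-1} / (X_s 1_{X_s>0} + ε) ds − b ∫₀ᵗ X_s ds + σ g(t)`. -/
def approxSol (X₀ a b σ H : ℝ) (g : ℝ → ℝ) (T ε : ℝ) (X : ℝ → ℝ) : Prop :=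
  ContinuousOn X (Set.Icc 0 T) ∧
    ∀ t ∈ Set.Icc (0:ℝ) T,
      X t = X₀ + a * (∫ s in (0:ℝ)..t,
            (s + ε) ^ (2 * H - 1) / ((if 0 < X s then X s else 0) + ε))
          - b * (∫ s in (0:ℝ)..t, X s) + σ * g t

lemma approxSol_cont {X₀ a b σ H : ℝ} {g Y : ℝ → ℝ} {T ε : ℝ}
    (hs : approxSol X₀ a b σ H g T ε Y) : ContinuousOn Y (Set.Icc 0 T) := hs.1

lemma approxSol_zero {X₀ a b σ H : ℝ} {g Y : ℝ → ℝ} {T ε : ℝ} (hT : 0 ≤ T)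
    (hg0 : g 0 = 0) (hs : approxSol X₀ a b σ H g T ε Y) : Y 0 = X₀ := by
  have h := hs.2 0 ⟨le_rfl, hT⟩
  simpa [hg0] using h

lemma aux_crossing {Y : ℝ → ℝ} {p q c : ℝ} (hpq : p < q)
    (hc : ContinuousOn Y (Set.Icc p q)) (hp : Y p ≤ c) (hq : c < Y q) :
    ∃ τ ∈ Set.Ico p q, Y τ = c ∧ ∀ s ∈ Set.Icc τ q, c ≤ Y s := by
  set Z : ℝ → ℝ := fun s => Y (max p (min s q)) with hZ
  have hZc : Continuous Z := by
    apply hc.comp_continuous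
    · exact (continuous_const.max (continuous_id.min continuous_const))
    · intro x
      constructor
      · exact le_max_left _ _
      · exact max_le (le_of_lt hpq) (min_le_right _ _)
  set S : Set ℝ := Set.Icc p q ∩ Z ⁻¹' (Set.Iic c) with hS
  have hZeq : ∀ s ∈ Set.Icc p q, Z s = Y s := by
    intro s hs
    simp only [hZ, min_eq_left hs.2, max_eq_right hs.1]
  have hSmem : ∀ s, s ∈ S ↔ s ∈ Set.Icc p q ∧ Y s ≤ c := by
    intro s
    constructor
    · rintro ⟨h1, h2⟩; exact ⟨h1, by rwa [← hZeq s h1]⟩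
    · rintro ⟨h1, h2⟩; exact ⟨h1, by simpa [Set.mem_preimage, hZeq s h1]⟩
  have hclosed : IsClosed S := isClosed_Icc.inter (isClosed_Iic.preimage hZc)
  have hne : S.Nonempty := ⟨p, (hSmem p).2 ⟨⟨le_refl p, le_of_lt hpq⟩, hp⟩⟩
  have hbdd : BddAbove S := ⟨q, fun x hx => ((hSmem x).1 hx).1.2⟩
  set τ := sSup S with hτ
  have hτS : τ ∈ S := hclosed.csSup_mem hne hbdd
  obtain ⟨hτIcc, hτle⟩ := (hSmem τ).1 hτS
  have hτq : τ ≠ q := fun h => absurd hτle (by rw [h]; exact not_le.2 hq)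
  have hτltq : τ < q := lt_of_le_of_ne hτIcc.2 hτq
  have hgt : ∀ s ∈ Set.Ioc τ q, c < Y s := by
    intro s hs
    by_contra h
    push_neg at h
    have hsS : s ∈ S := (hSmem s).2 ⟨⟨hτIcc.1.trans hs.1.le, hs.2⟩, h⟩
    exact absurd (le_csSup hbdd hsS) (not_le.2 hs.1)
  have hge : c ≤ Y τ := by
    have hcw : Tendsto Y (nhdsWithin τ (Set.Ioc τ q)) (nhds (Y τ)) :=
      (hc τ hτIcc).mono (Set.Ioc_subset_Icc_self.trans
        (Set.Icc_subset_Icc hτIcc.1 le_rfl))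
    haveI : (nhdsWithin τ (Set.Ioc τ q)).NeBot := left_nhdsWithin_Ioc_neBot hτltq
    refine ge_of_tendsto hcw ?_
    filter_upwards [self_mem_nhdsWithin] with s hs using (hgt s hs).le
  refine ⟨τ, ⟨hτIcc.1, hτltq⟩, le_antisymm hτle hge, ?_⟩
  intro s hs
  rcases eq_or_lt_of_le hs.1 with h | h
  · rw [← h]; exact hge
  · exact (hgt s ⟨h, hs.2⟩).le

lemma aux_relu (x : ℝ) : (if 0 < x then x else 0) = max x 0 := by
  split_ifs with h
  · exact (max_eq_left h.le).symm
  · exact (max_eq_right (not_lt.1 h)).symm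

lemma aux_phi_cont {Y : ℝ → ℝ} {T ε H : ℝ} (hε : 0 < ε)
    (hY : ContinuousOn Y (Set.Icc 0 T)) :
    ContinuousOn (fun s => (s + ε) ^ (2*H-1) / (max (Y s) 0 + ε)) (Set.Icc 0 T) := by
  apply ContinuousOn.div
  · apply ContinuousOn.rpow_const (by fun_prop)
    intro s hs
    left
    have := hs.1
    positivity
  · exact ((hY.sup continuousOn_const).add continuousOn_const)
  · intro s hs
    have : 0 ≤ max (Y s) 0 := le_max_right _ _
    positivity

lemma aux_integrable {Y : ℝ → ℝ} {T ε H : ℝ} (hε : 0 < ε)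
    (hY : ContinuousOn Y (Set.Icc 0 T)) {p q : ℝ} (hp : 0 ≤ p) (hpq : p ≤ q) (hq : q ≤ T) :
    IntervalIntegrable (fun s => (s + ε) ^ (2*H-1) / (max (Y s) 0 + ε)) volume p q ∧
      IntervalIntegrable Y volume p q := by
  have hsub : Set.uIcc p q ⊆ Set.Icc 0 T := by
    rw [Set.uIcc_of_le hpq]
    exact Set.Icc_subset_Icc hp hq
  exact ⟨((aux_phi_cont (H := H) hε hY).mono hsub).intervalIntegrable,
    (hY.mono hsub).intervalIntegrable⟩

lemma aux_incr {X₀ a b σ H : ℝ} {g Y : ℝ → ℝ} {T ε : ℝ} (hε : 0 < ε)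
    (hs : approxSol X₀ a b σ H g T ε Y) {u v : ℝ} (hu : 0 ≤ u) (huv : u ≤ v) (hv : v ≤ T) :
    Y v - Y u = a * (∫ s in u..v, (s + ε) ^ (2*H-1) / (max (Y s) 0 + ε))
      - b * (∫ s in u..v, Y s) + σ * (g v - g u) := by
  obtain ⟨hYc, heq⟩ := hs
  have h1 := heq u ⟨hu, huv.trans hv⟩
  have h2 := heq v ⟨hu.trans huv, hv⟩
  have hcg : ∀ t, (fun s => (s + ε) ^ (2*H-1) / ((if 0 < Y s then Y s else 0) + ε)) t
      = (fun s => (s + ε) ^ (2*H-1) / (max (Y s) 0 + ε)) t := by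
    intro t; simp [aux_relu]
  rw [intervalIntegral.integral_congr (fun t _ => hcg t)] at h1 h2
  have huT : u ≤ T := huv.trans hv
  obtain ⟨hφ1, hY1⟩ := aux_integrable (H := H) hε hYc le_rfl hu huT
  obtain ⟨hφ2, hY2⟩ := aux_integrable (H := H) hε hYc hu huv hv
  have e1 := intervalIntegral.integral_add_adjacent_intervals hφ1 hφ2
  have e2 := intervalIntegral.integral_add_adjacent_intervals hY1 hY2
  rw [h1, h2, ← e1, ← e2]
  ring

-- the elementary integral computation
lemma aux_rpow_integral {T ε H : ℝ} (hε : 0 < ε) (hε1 : ε ≤ 1) (hT : 0 < T)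
    (hH0 : 0 < H) (hH : H < 1/2) :
    (∫ s in (0:ℝ)..T, (s + ε) ^ (2*H-1)) ≤ (T+1) ^ (2*H) / (2*H) := by
  have h1 : (∫ s in (0:ℝ)..T, (s + ε) ^ (2*H-1)) = ∫ x in ε..(T+ε), x ^ (2*H-1) := by
    have := intervalIntegral.integral_comp_add_right (a := (0:ℝ)) (b := T)
      (fun x => x ^ (2*H-1)) ε
    simpa using this
  rw [h1, integral_rpow (Or.inl (by linarith))]
  have h2 : 2*H-1+1 = 2*H := by ring
  rw [h2]
  have h3 : (T+ε) ^ (2*H) ≤ (T+1) ^ (2*H) :=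
    Real.rpow_le_rpow (by linarith) (by linarith) (by linarith)
  have h4 : 0 ≤ ε ^ (2*H) := Real.rpow_nonneg hε.le _
  have h5 : 0 < 2*H := by linarith
  rw [div_le_div_iff_of_pos_right h5]
  linarith

set_option maxHeartbeats 1000000 in

lemma aux_lower {X₀ a b σ H beta C : ℝ} {g : ℝ → ℝ}
    (hX₀ : 0 < X₀) (ha : 0 < a) (hb : 0 ≤ b) (hσ : 0 < σ)
    (hH0 : 0 < H) (hH : H < 1/2) (hβ0 : 0 < beta) (hβ1 : beta < 1) (hC : 0 < C)
    (hg0 : g 0 = 0) {T : ℝ} (hT : 0 < T)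
    (hg : ∀ s ∈ Set.Icc (0:ℝ) T, ∀ t ∈ Set.Icc (0:ℝ) T, |g t - g s| ≤ C * |t - s| ^ beta)
    {δ : ℝ} (hδ : 0 < δ) {ε : ℝ} (hε : 0 < ε)
    (hεsmall : ε ≤ min 1
      (a * (T+1) ^ (2*H-1) * ((δ / (2*(σ*C))) ^ (1/beta)) ^ (1-beta) / (σ*C)))
    {Y : ℝ → ℝ} (hsol : approxSol X₀ a b σ H g T ε Y) :
    ∀ t ∈ Set.Icc (0:ℝ) T, -δ ≤ Y t := by
  set D : ℝ := a * (T+1) ^ (2*H-1) with hD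
  set K : ℝ := σ * C with hK
  set Δ₀ : ℝ := (δ / (2*K)) ^ (1/beta) with hΔ₀
  have hTpos : (0:ℝ) < T + 1 := by linarith
  have hDpos : 0 < D := by
    have := Real.rpow_pos_of_pos hTpos (2*H-1)
    positivity
  have hKpos : 0 < K := by positivity
  have hΔ₀pos : 0 < Δ₀ := Real.rpow_pos_of_pos (by positivity) _
  have hYc := approxSol_cont hsol
  intro t ht
  by_contra hcon
  push_neg at hcon
  have hY0 : Y 0 = X₀ := approxSol_zero hT.le hg0 hsol
  have ht0 : 0 < t := by
    rcases lt_or_eq_of_le ht.1 with h | h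
    · exact h
    · rw [← h, hY0] at hcon; linarith
  -- last time Y ≥ -δ/2 before t
  obtain ⟨τ, hτmem, hτeq, hτge⟩ := aux_crossing (Y := fun s => -Y s) ht0
    (hYc.neg.mono (Set.Icc_subset_Icc le_rfl ht.2)) (c := δ/2)
    (by show -Y 0 ≤ δ/2; rw [hY0]; linarith) (by show δ/2 < -Y t; linarith)
  have hτt : τ < t := hτmem.2
  have hτ0 : 0 ≤ τ := hτmem.1
  set Δ : ℝ := t - τ with hΔdef
  have hΔpos : 0 < Δ := by simp [hΔdef]; linarith
  have hYle : ∀ s ∈ Set.Icc τ t, Y s ≤ -(δ/2) := by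
    intro s hs
    have := hτge s hs
    linarith
  -- increment identity
  have hid := aux_incr hε hsol hτ0 hτt.le ht.2
  -- integral bounds
  obtain ⟨hφint, hYint⟩ := aux_integrable (H := H) hε hYc hτ0 hτt.le ht.2
  have hε1 : ε ≤ 1 := hεsmall.trans (min_le_left _ _)
  have hφlb : ((T+1) ^ (2*H-1) / ε) * Δ ≤
      ∫ s in τ..t, (s + ε) ^ (2*H-1) / (max (Y s) 0 + ε) := by
    have hpt : ∀ s ∈ Set.Icc τ t, (T+1) ^ (2*H-1) / ε ≤ (s + ε) ^ (2*H-1) / (max (Y s) 0 + ε) := by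
      intro s hs
      have hsle : Y s ≤ -(δ/2) := hYle s hs
      have hmax : max (Y s) 0 = 0 := max_eq_right (by linarith)
      rw [hmax, zero_add]
      rw [div_le_div_iff_of_pos_right hε]
      apply Real.rpow_le_rpow_of_nonpos
      · have : 0 ≤ s := hτ0.trans hs.1
        positivity
      · have : s ≤ T := hs.2.trans ht.2
        linarith
      · linarith
    have h1 := intervalIntegral.integral_mono_on hτt.le
      (intervalIntegrable_const (c := (T+1) ^ (2*H-1) / ε)) hφint hpt
    rw [intervalIntegral.integral_const, smul_eq_mul] at h1
    calc ((T+1) ^ (2*H-1) / ε) * Δ = (t - τ) * ((T+1) ^ (2*H-1) / ε) := by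
          rw [hΔdef]; ring
      _ ≤ _ := h1
  have hYub : (∫ s in τ..t, Y s) ≤ 0 := by
    have h1 := intervalIntegral.integral_mono_on hτt.le hYint
      (intervalIntegrable_const (c := (0:ℝ))) (fun s hs => by linarith [hYle s hs])
    simpa using h1
  have hgb : -(K * Δ ^ beta) ≤ σ * (g t - g τ) := by
    have h1 := hg τ ⟨hτ0, hτt.le.trans ht.2⟩ t ⟨ht.1, ht.2⟩
    have h2 : |t - τ| = Δ := abs_of_pos hΔpos
    rw [h2] at h1
    have h3 := (abs_le.1 h1).1
    have h4 : σ * (-(C * Δ ^ beta)) ≤ σ * (g t - g τ) := mul_le_mul_of_nonneg_left h3 hσ.le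
    calc -(K * Δ ^ beta) = σ * (-(C * Δ ^ beta)) := by rw [hK]; ring
      _ ≤ _ := h4
  -- combine
  have hYτ : Y τ = -(δ/2) := by
    have : -Y τ = δ/2 := hτeq
    linarith
  have hI := mul_le_mul_of_nonneg_left hφlb ha.le
  have hJ : b * (∫ s in τ..t, Y s) ≤ 0 := mul_nonpos_of_nonneg_of_nonpos hb hYub
  have hDe : a * ((T+1) ^ (2*H-1) / ε * Δ) = (D/ε) * Δ := by rw [hD]; ring
  have hcomb : δ/2 + (D/ε) * Δ < K * Δ ^ beta := by
    rw [hDe] at hI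
    linarith [hid]
  -- step 1 : Δ₀ ≤ Δ
  have hΔ₀Δ : Δ₀ ≤ Δ := by
    by_contra h
    push_neg at h
    have h1 : Δ ^ beta ≤ Δ₀ ^ beta := Real.rpow_le_rpow hΔpos.le h.le hβ0.le
    have h2 : Δ₀ ^ beta = δ / (2*K) := by
      rw [hΔ₀, one_div, Real.rpow_inv_rpow (by positivity) hβ0.ne']
    have h3 : K * Δ ^ beta ≤ K * Δ₀ ^ beta := mul_le_mul_of_nonneg_left h1 hKpos.le
    rw [h2] at h3
    have h4 : K * (δ / (2*K)) = δ/2 := by field_simp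
    have h5 : 0 < (D/ε) * Δ := by positivity
    linarith
  -- step 2 : contradiction with smallness of ε
  have h5 : (D/ε) * Δ < K * Δ ^ beta := by
    have : 0 < δ/2 := by linarith
    linarith
  have h6 : D * Δ < K * Δ ^ beta * ε := by
    rw [div_mul_eq_mul_div] at h5
    exact (div_lt_iff₀ hε).1 h5
  have hΔsplit : Δ ^ (1-beta) * Δ ^ beta = Δ := by
    rw [← Real.rpow_add hΔpos, sub_add_cancel, Real.rpow_one]
  have h7 : D * Δ ^ (1-beta) * Δ ^ beta < (K * ε) * Δ ^ beta := by
    calc D * Δ ^ (1-beta) * Δ ^ beta = D * Δ := by rw [mul_assoc, hΔsplit]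
      _ < K * Δ ^ beta * ε := h6
      _ = (K * ε) * Δ ^ beta := by ring
  have h8 : D * Δ ^ (1-beta) < K * ε :=
    (mul_lt_mul_iff_left₀ (Real.rpow_pos_of_pos hΔpos beta)).1 h7
  have h9 : D * Δ₀ ^ (1-beta) ≤ D * Δ ^ (1-beta) :=
    mul_le_mul_of_nonneg_left (Real.rpow_le_rpow hΔ₀pos.le hΔ₀Δ (by linarith)) hDpos.le
  have h10 : K * ε ≤ D * Δ₀ ^ (1-beta) := by
    have h := hεsmall.trans (min_le_right _ _)
    have := (le_div_iff₀ hKpos).1 h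
    linarith
  linarith

set_option maxHeartbeats 1000000 in
lemma aux_upper {X₀ a b σ H beta C : ℝ} {g : ℝ → ℝ}
    (hX₀ : 0 < X₀) (ha : 0 < a) (hb : 0 ≤ b) (hσ : 0 < σ)
    (hH0 : 0 < H) (hH : H < 1/2) (hβ0 : 0 < beta) (hβ1 : beta < 1) (hC : 0 < C)
    (hg0 : g 0 = 0) {T : ℝ} (hT : 0 < T)
    (hg : ∀ s ∈ Set.Icc (0:ℝ) T, ∀ t ∈ Set.Icc (0:ℝ) T, |g t - g s| ≤ C * |t - s| ^ beta)
    {ε : ℝ} (hε : 0 < ε) (hε1 : ε ≤ 1)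
    {Y : ℝ → ℝ} (hsol : approxSol X₀ a b σ H g T ε Y) :
    ∀ t ∈ Set.Icc (0:ℝ) T,
      Y t ≤ 2*X₀ + 2*(σ*C*T^beta) + 2*Real.sqrt (a*((T+1)^(2*H)/(2*H))) + 2 := by
  set I : ℝ := (T+1)^(2*H)/(2*H) with hI
  set R : ℝ := Real.sqrt (a*I) with hR
  set M : ℝ := 2*X₀ + 2*(σ*C*T^beta) + 2*R + 2 with hM
  have hIpos : 0 < I := by
    have : (0:ℝ) < (T+1)^(2*H) := Real.rpow_pos_of_pos (by linarith) _
    positivity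
  have hRpos : 0 < R := Real.sqrt_pos.2 (by positivity)
  have hR2 : R * R = a * I := Real.mul_self_sqrt (by positivity)
  have hTβ : 0 ≤ σ*C*T^beta := by
    have : 0 ≤ T^beta := Real.rpow_nonneg hT.le _
    positivity
  have hMpos : 0 < M := by rw [hM]; linarith
  have hYc := approxSol_cont hsol
  have hY0 : Y 0 = X₀ := approxSol_zero hT.le hg0 hsol
  intro t ht
  by_contra hcon
  push_neg at hcon
  have ht0 : 0 < t := by
    rcases lt_or_eq_of_le ht.1 with h | h
    · exact h
    · rw [← h, hY0] at hcon; rw [hM] at hcon; linarith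
  obtain ⟨τ, hτmem, hτeq, hτge⟩ := aux_crossing ht0
    (hYc.mono (Set.Icc_subset_Icc le_rfl ht.2)) (c := M/2)
    (by rw [hY0, hM]; linarith) (by linarith)
  have hτt : τ < t := hτmem.2
  have hτ0 : 0 ≤ τ := hτmem.1
  have hid := aux_incr hε hsol hτ0 hτt.le ht.2
  obtain ⟨hφint, hYint⟩ := aux_integrable (H := H) hε hYc hτ0 hτt.le ht.2
  -- upper bound on the drift integral
  have hψc : ContinuousOn (fun s => (s+ε)^(2*H-1) / (M/2)) (Set.Icc 0 T) := by
    apply ContinuousOn.div_const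
    apply ContinuousOn.rpow_const (by fun_prop)
    intro s hs
    left
    have := hs.1
    positivity
  have hψint : IntervalIntegrable (fun s => (s+ε)^(2*H-1) / (M/2)) volume τ t := by
    apply (hψc.mono _).intervalIntegrable
    rw [Set.uIcc_of_le hτt.le]
    exact Set.Icc_subset_Icc hτ0 ht.2
  have hψintT : IntervalIntegrable (fun s => (s+ε)^(2*H-1) / (M/2)) volume 0 T := by
    apply (hψc.mono _).intervalIntegrable
    rw [Set.uIcc_of_le hT.le]
  have hφub : (∫ s in τ..t, (s + ε) ^ (2*H-1) / (max (Y s) 0 + ε)) ≤ 2*I/M := by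
    have h1 : ∀ s ∈ Set.Icc τ t,
        (s + ε) ^ (2*H-1) / (max (Y s) 0 + ε) ≤ (s+ε)^(2*H-1) / (M/2) := by
      intro s hs
      have hs0 : 0 ≤ s := hτ0.trans hs.1
      have hge : M/2 ≤ max (Y s) 0 + ε := by
        have h2 := hτge s hs
        have h3 : Y s ≤ max (Y s) 0 := le_max_left _ _
        linarith
      apply div_le_div_of_nonneg_left (by positivity) (by positivity) hge
    have h2 := intervalIntegral.integral_mono_on hτt.le hφint hψint h1
    have h3 : (∫ s in τ..t, (s+ε)^(2*H-1) / (M/2)) ≤ ∫ s in (0:ℝ)..T, (s+ε)^(2*H-1) / (M/2) := by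
      apply intervalIntegral.integral_mono_interval hτ0 hτt.le ht.2 _ hψintT
      rw [Filter.EventuallyLE, ae_restrict_iff' measurableSet_Ioc]
      apply Filter.Eventually.of_forall
      intro s hs
      have : 0 < s := hs.1
      positivity
    have h4 : (∫ s in (0:ℝ)..T, (s+ε)^(2*H-1) / (M/2))
        = (∫ s in (0:ℝ)..T, (s+ε)^(2*H-1)) / (M/2) := by
      exact intervalIntegral.integral_div _ _
    have h5 := aux_rpow_integral hε hε1 hT hH0 hH
    have h6 : (∫ s in (0:ℝ)..T, (s+ε)^(2*H-1)) / (M/2) ≤ I / (M/2) := by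
      gcongr
    have h7 : I / (M/2) = 2*I/M := by field_simp
    linarith
  -- Y integral nonneg
  have hJlb : 0 ≤ ∫ s in τ..t, Y s := by
    have h1 := intervalIntegral.integral_mono_on hτt.le
      (intervalIntegrable_const (c := (0:ℝ))) hYint
      (fun s hs => le_trans (by linarith) (hτge s hs))
    simpa using h1
  -- g increment bound
  have hG : σ * (g t - g τ) ≤ σ * (C * T^beta) := by
    have h1 := hg τ ⟨hτ0, hτt.le.trans ht.2⟩ t ⟨ht.1, ht.2⟩
    have h2 : |t - τ| = t - τ := abs_of_pos (by linarith)
    rw [h2] at h1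
    have h3 : (t - τ)^beta ≤ T^beta := Real.rpow_le_rpow (by linarith) (by linarith [ht.2]) hβ0.le
    have h4 := (abs_le.1 h1).2
    have h5 : g t - g τ ≤ C * T^beta := by nlinarith
    exact mul_le_mul_of_nonneg_left h5 hσ.le
  -- assemble
  have hIub : a * (∫ s in τ..t, (s + ε) ^ (2*H-1) / (max (Y s) 0 + ε)) ≤ R := by
    have h1 : a * (2*I/M) ≤ R := by
      rw [mul_div_assoc' a _ M, div_le_iff₀ hMpos]
      nlinarith [hR2, hRpos, hMpos]
    calc a * _ ≤ a * (2*I/M) := mul_le_mul_of_nonneg_left hφub ha.le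
      _ ≤ R := h1
  have hJub : -(b * (∫ s in τ..t, Y s)) ≤ 0 := by
    have := mul_nonneg hb hJlb
    linarith
  have hfin : M/2 < R + σ * (C * T^beta) := by
    have hYt : M < Y t := hcon
    linarith [hid]
  rw [hM] at hfin
  linarith

/-- Near a right excursion endpoint: `Y u ≤ Y v + b M (v-u) + σ C (v-u)^β`. -/
lemma aux_osc {X₀ a b σ H beta C M : ℝ} {g : ℝ → ℝ}
    (ha : 0 < a) (hb : 0 ≤ b) (hσ : 0 < σ) (hβ0 : 0 < beta) (hC : 0 < C)
    {T : ℝ} (hT : 0 < T)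
    (hg : ∀ s ∈ Set.Icc (0:ℝ) T, ∀ t ∈ Set.Icc (0:ℝ) T, |g t - g s| ≤ C * |t - s| ^ beta)
    {ε : ℝ} (hε : 0 < ε) {Y : ℝ → ℝ} (hsol : approxSol X₀ a b σ H g T ε Y)
    (hM : ∀ s ∈ Set.Icc (0:ℝ) T, Y s ≤ M)
    {u v : ℝ} (hu : 0 ≤ u) (huv : u ≤ v) (hv : v ≤ T) :
    Y u ≤ Y v + b * (M * (v - u)) + σ * (C * (v - u) ^ beta) := by
  have hYc := approxSol_cont hsol
  have hid := aux_incr hε hsol hu huv hv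
  obtain ⟨hφint, hYint⟩ := aux_integrable (H := H) hε hYc hu huv hv
  have hφ0 : 0 ≤ ∫ s in u..v, (s + ε) ^ (2*H-1) / (max (Y s) 0 + ε) := by
    have h1 := intervalIntegral.integral_mono_on huv
      (intervalIntegrable_const (c := (0:ℝ))) hφint
      (fun s hs => by
        have hs0 : 0 ≤ s := hu.trans hs.1
        have h2 : 0 ≤ max (Y s) 0 := le_max_right _ _
        positivity)
    simpa using h1
  have hJ : (∫ s in u..v, Y s) ≤ M * (v - u) := by
    have h1 := intervalIntegral.integral_mono_on huv hYint
      (intervalIntegrable_const (c := M))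
      (fun s hs => hM s ⟨hu.trans hs.1, hs.2.trans hv⟩)
    rw [intervalIntegral.integral_const, smul_eq_mul] at h1
    linarith
  have hG : -(σ * (C * (v - u) ^ beta)) ≤ σ * (g v - g u) := by
    have h1 := hg u ⟨hu, huv.trans hv⟩ v ⟨hu.trans huv, hv⟩
    have h2 : |v - u| = v - u := abs_of_nonneg (by linarith)
    rw [h2] at h1
    have h3 := (abs_le.1 h1).1
    nlinarith
  nlinarith [mul_nonneg ha.le hφ0, mul_le_mul_of_nonneg_left hJ hb]

/-- Near a left excursion endpoint: growth is slow. -/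
lemma aux_left {X₀ a b σ H beta C : ℝ} {g : ℝ → ℝ}
    (ha : 0 < a) (hb : 0 ≤ b) (hσ : 0 < σ) (hH0 : 0 < H) (hH : H < 1/2)
    (hβ0 : 0 < beta) (hC : 0 < C) {T : ℝ} (hT : 0 < T)
    (hg : ∀ s ∈ Set.Icc (0:ℝ) T, ∀ t ∈ Set.Icc (0:ℝ) T, |g t - g s| ≤ C * |t - s| ^ beta)
    {ε : ℝ} (hε : 0 < ε) {Y : ℝ → ℝ} (hsol : approxSol X₀ a b σ H g T ε Y)
    {α t δ : ℝ} (hα : 0 < α) (hαt : α ≤ t) (ht : t ≤ T) (hδ : 0 < δ)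
    (hYα : Y α ≤ δ/4)
    (hsmall : a * α ^ (2*H-1) / (δ/4) * (t - α) + σ * (C * (t - α) ^ beta) < δ/4) :
    Y t < δ/2 := by
  by_contra hcon
  push_neg at hcon
  have hYc := approxSol_cont hsol
  have hαt' : α < t := by
    rcases lt_or_eq_of_le hαt with h | h
    · exact h
    · exfalso; rw [← h] at hcon; linarith
  obtain ⟨τ, hτmem, hτeq, hτge⟩ := aux_crossing hαt'
    (hYc.mono (Set.Icc_subset_Icc hα.le ht)) (c := δ/4) hYα (by linarith)
  have hτt : τ < t := hτmem.2
  have hτα : α ≤ τ := hτmem.1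
  have hτ0 : 0 ≤ τ := hα.le.trans hτα
  have hid := aux_incr hε hsol hτ0 hτt.le ht
  obtain ⟨hφint, hYint⟩ := aux_integrable (H := H) hε hYc hτ0 hτt.le ht
  -- drift bound
  have hφub : (∫ s in τ..t, (s + ε) ^ (2*H-1) / (max (Y s) 0 + ε))
      ≤ α ^ (2*H-1) / (δ/4) * (t - τ) := by
    have h1 : ∀ s ∈ Set.Icc τ t,
        (s + ε) ^ (2*H-1) / (max (Y s) 0 + ε) ≤ α ^ (2*H-1) / (δ/4) := by
      intro s hs
      have hsα : α ≤ s := hτα.trans hs.1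
      have hnum : (s + ε) ^ (2*H-1) ≤ α ^ (2*H-1) :=
        Real.rpow_le_rpow_of_nonpos hα (by linarith) (by linarith)
      have hden : δ/4 ≤ max (Y s) 0 + ε := by
        have h2 := hτge s hs
        have h3 : Y s ≤ max (Y s) 0 := le_max_left _ _
        linarith
      have hnum0 : 0 ≤ (s + ε) ^ (2*H-1) := by
        have : 0 ≤ s := hτ0.trans hs.1
        positivity
      exact div_le_div₀ (by positivity) hnum (by positivity) hden
    have h2 := intervalIntegral.integral_mono_on hτt.le hφint
      (intervalIntegrable_const (c := α ^ (2*H-1) / (δ/4))) h1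
    rw [intervalIntegral.integral_const, smul_eq_mul] at h2
    linarith
  -- Y nonneg on the interval
  have hJ : 0 ≤ ∫ s in τ..t, Y s := by
    have h1 := intervalIntegral.integral_mono_on hτt.le
      (intervalIntegrable_const (c := (0:ℝ))) hYint
      (fun s hs => le_trans (by linarith) (hτge s hs))
    simpa using h1
  -- g bound
  have hG : σ * (g t - g τ) ≤ σ * (C * (t - α) ^ beta) := by
    have h1 := hg τ ⟨hτ0, hτt.le.trans ht⟩ t ⟨hτ0.trans hτt.le, ht⟩
    have h2 : |t - τ| = t - τ := abs_of_nonneg (by linarith)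
    rw [h2] at h1
    have h3 : (t - τ) ^ beta ≤ (t - α) ^ beta :=
      Real.rpow_le_rpow (by linarith) (by linarith) hβ0.le
    have h4 := (abs_le.1 h1).2
    have h5 : g t - g τ ≤ C * (t - α)^beta := h4.trans (mul_le_mul_of_nonneg_left h3 hC.le)
    exact mul_le_mul_of_nonneg_left h5 hσ.le
  have hdrift : a * (∫ s in τ..t, (s + ε) ^ (2*H-1) / (max (Y s) 0 + ε))
      ≤ a * α ^ (2*H-1) / (δ/4) * (t - α) := by
    have h1 := mul_le_mul_of_nonneg_left hφub ha.le
    have h4 : t - τ ≤ t - α := by linarith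
    have h5 : 0 ≤ a * (α ^ (2*H-1) / (δ/4)) := by positivity
    have h3 : a * (α ^ (2*H-1) / (δ/4) * (t - τ)) ≤ a * α ^ (2*H-1) / (δ/4) * (t - α) := by
      calc a * (α ^ (2*H-1) / (δ/4) * (t - τ)) = (a * (α ^ (2*H-1) / (δ/4))) * (t - τ) := by ring
        _ ≤ (a * (α ^ (2*H-1) / (δ/4))) * (t - α) := mul_le_mul_of_nonneg_left h4 h5
        _ = a * α ^ (2*H-1) / (δ/4) * (t - α) := by ring
    calc a * _ ≤ a * (α ^ (2*H-1) / (δ/4) * (t - τ)) := by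
          have := mul_le_mul_of_nonneg_left hφub ha.le
          linarith [this]
      _ ≤ _ := h3
  have hbJ : -(b * (∫ s in τ..t, Y s)) ≤ 0 := by
    have := mul_nonneg hb hJ
    linarith
  have : Y t - Y τ ≥ δ/2 - δ/4 := by rw [hτeq]; linarith
  linarith [hid]

set_option maxHeartbeats 2000000 in
/-- **Theorem 3.9(a).** Let `(α, β')` be a connected component of
`{t > 0 : X_t > 0}` with `α > 0` and `β' < ∞` (so `X_α ≤ 0` and `X_{β'} ≤ 0`).
Then `lim_{t↓α} X_t = 0 = X_α` and `lim_{t↑β'} X_t = 0 = X_{β'}`. -/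
theorem excursion_endpoints_limits
    (X₀ a b σ H : ℝ) (hX₀ : 0 < X₀) (ha : 0 < a) (hb : 0 ≤ b) (hσ : 0 < σ)
    (hH0 : 0 < H) (hH : H < 1/2)
    (g : ℝ → ℝ) (hgc : ContinuousOn g (Set.Ici 0)) (hg0 : g 0 = 0)
    (Xe : ℝ → ℝ → ℝ)
    (hXe : ∀ ε > (0:ℝ), ∀ T > (0:ℝ), approxSol X₀ a b σ H g T ε (Xe ε))
    (X : ℝ → ℝ)
    (hX : ∀ t ≥ (0:ℝ),
      Tendsto (fun ε => Xe ε t) (nhdsWithin 0 (Set.Ioi 0)) (nhds (X t)))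
    (β : ℝ) (hβ0 : 0 < β) (hβH : β < H)
    (hgH : ∀ T > (0:ℝ), ∃ C > (0:ℝ), ∀ s ∈ Set.Icc (0:ℝ) T, ∀ t ∈ Set.Icc (0:ℝ) T,
      |g t - g s| ≤ C * |t - s| ^ β)
    (α β' : ℝ) (hα : 0 < α) (hαβ : α < β')
    (hcomp : ∀ t ∈ Set.Ioo α β', 0 < X t)
    (hXα : X α ≤ 0) (hXβ : X β' ≤ 0) :
    (Tendsto X (nhdsWithin α (Set.Ioi α)) (nhds 0) ∧ X α = 0) ∧
    (Tendsto X (nhdsWithin β' (Set.Iio β')) (nhds 0) ∧ X β' = 0) := by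
  have hβ1 : β < 1 := by linarith
  set T : ℝ := β' + 1 with hT
  have hTpos : 0 < T := by rw [hT]; linarith
  have hβ'T : β' ≤ T := by rw [hT]; linarith
  obtain ⟨C, hC, hgH'⟩ := hgH T hTpos
  have hsolT : ∀ ε > (0:ℝ), approxSol X₀ a b σ H g T ε (Xe ε) :=
    fun ε hε => hXe ε hε T hTpos
  -- nonnegativity of X on [0,T]
  have hXnonneg : ∀ t ∈ Set.Icc (0:ℝ) T, 0 ≤ X t := by
    intro t ht
    have key : ∀ δ > (0:ℝ), -δ ≤ X t := by
      intro δ hδ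
      set E : ℝ := min 1
        (a * (T+1) ^ (2*H-1) * ((δ / (2*(σ*C))) ^ (1/β)) ^ (1-β) / (σ*C)) with hE
      have hEpos : 0 < E := by
        apply lt_min one_pos
        have h1 : (0:ℝ) < (T+1) ^ (2*H-1) := Real.rpow_pos_of_pos (by linarith) _
        have h2 : (0:ℝ) < (δ / (2*(σ*C))) ^ (1/β) := Real.rpow_pos_of_pos (by positivity) _
        have h3 : (0:ℝ) < ((δ / (2*(σ*C))) ^ (1/β)) ^ (1-β) := Real.rpow_pos_of_pos h2 _
        positivity
      have hev : ∀ᶠ ε in nhdsWithin (0:ℝ) (Set.Ioi 0), -δ ≤ Xe ε t := by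
        filter_upwards [Ioo_mem_nhdsGT_of_mem (Set.mem_Ico.2 ⟨le_rfl, hEpos⟩)] with ε hε
        exact aux_lower hX₀ ha hb hσ hH0 hH hβ0 hβ1 hC hg0 hTpos hgH' hδ hε.1
          hε.2.le (hsolT ε hε.1) t ht
      exact ge_of_tendsto (hX t ht.1) hev
    by_contra h
    push_neg at h
    have := key (-(X t)/2) (by linarith)
    linarith
  have hXα0 : X α = 0 :=
    le_antisymm hXα (hXnonneg α ⟨hα.le, by linarith⟩)
  have hXβ0 : X β' = 0 :=
    le_antisymm hXβ (hXnonneg β' ⟨by linarith, hβ'T⟩)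
  -- the uniform bound
  set M : ℝ := 2*X₀ + 2*(σ*C*T^β) + 2*Real.sqrt (a*((T+1)^(2*H)/(2*H))) + 2 with hM
  have hMb : ∀ ε ∈ Set.Ioc (0:ℝ) 1, ∀ s ∈ Set.Icc (0:ℝ) T, Xe ε s ≤ M :=
    fun ε hε => aux_upper hX₀ ha hb hσ hH0 hH hβ0 hβ1 hC hg0 hTpos hgH' hε.1 hε.2
      (hsolT ε hε.1)
  have hM0 : 0 ≤ M := by
    have h1 : 0 ≤ T^β := Real.rpow_nonneg hTpos.le _
    have h2 : 0 ≤ Real.sqrt (a*((T+1)^(2*H)/(2*H))) := Real.sqrt_nonneg _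
    rw [hM]; positivity
  have hIoc : Set.Ioc (0:ℝ) 1 ∈ nhdsWithin (0:ℝ) (Set.Ioi 0) :=
    Filter.mem_of_superset (Ioo_mem_nhdsGT_of_mem (Set.mem_Ico.2 ⟨le_rfl, one_pos⟩))
      Set.Ioo_subset_Ioc_self
  constructor
  · -- left endpoint
    refine ⟨?_, hXα0⟩
    rw [Metric.tendsto_nhdsWithin_nhds]
    intro δ hδ
    set K₁ : ℝ := a * α ^ (2*H-1) / (δ/4) with hK₁
    have hK₁pos : 0 < K₁ := by
      have : (0:ℝ) < α ^ (2*H-1) := Real.rpow_pos_of_pos hα _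
      rw [hK₁]; positivity
    set h₂ : ℝ := (δ/(8*(σ*C))) ^ (1/β) with hh₂
    have hh₂pos : 0 < h₂ := Real.rpow_pos_of_pos (by positivity) _
    set h : ℝ := min (β' - α) (min (δ/8 / (K₁+1)) h₂) with hh
    have hpos : 0 < h := by
      apply lt_min (by linarith)
      exact lt_min (by positivity) hh₂pos
    refine ⟨h, hpos, ?_⟩
    intro t htmem hdist
    rw [Real.dist_eq] at hdist
    have htα : α < t := htmem
    have htα' : t - α < h := by
      rw [abs_of_pos (by linarith)] at hdist
      exact hdist
    have htβ : t < β' := by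
      have := hpos.trans_le (min_le_left _ _)
      have h1 : h ≤ β' - α := min_le_left _ _
      linarith
    have htT : t ≤ T := by linarith
    -- smallness condition
    have hsmall : K₁ * (t - α) + σ * (C * (t - α) ^ β) < δ/4 := by
      have h1 : K₁ * (t - α) < δ/8 := by
        have h2 : t - α ≤ δ/8 / (K₁+1) :=
          htα'.le.trans ((min_le_right _ _).trans (min_le_left _ _))
        have h3 : K₁ * (t - α) ≤ K₁ * (δ/8 / (K₁+1)) :=
          mul_le_mul_of_nonneg_left h2 hK₁pos.le
        have h4 : K₁ * (δ/8 / (K₁+1)) < δ/8 := by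
          rw [mul_div_assoc' K₁ _ _, div_lt_iff₀ (by positivity)]
          nlinarith
        linarith
      have h5 : σ * (C * (t - α) ^ β) ≤ δ/8 := by
        have h6 : t - α ≤ h₂ := htα'.le.trans ((min_le_right _ _).trans (min_le_right _ _))
        have h7 : (t - α) ^ β ≤ h₂ ^ β :=
          Real.rpow_le_rpow (by linarith) h6 hβ0.le
        have h8 : h₂ ^ β = δ/(8*(σ*C)) := by
          rw [hh₂, one_div, Real.rpow_inv_rpow (by positivity) hβ0.ne']
        have h9 : σ * (C * (t - α) ^ β) ≤ σ * (C * (δ/(8*(σ*C)))) := by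
          rw [← h8]
          exact mul_le_mul_of_nonneg_left (mul_le_mul_of_nonneg_left h7 hC.le) hσ.le
        have h10 : σ * (C * (δ/(8*(σ*C)))) = δ/8 := by field_simp
        linarith
      linarith
    -- eventual bound
    have hev : ∀ᶠ ε in nhdsWithin (0:ℝ) (Set.Ioi 0), Xe ε t ≤ δ/2 := by
      have h1 : ∀ᶠ ε in nhdsWithin (0:ℝ) (Set.Ioi 0), Xe ε α < δ/4 := by
        have h2 := hX α hα.le
        rw [hXα0] at h2
        exact h2.eventually_lt_const (by linarith)
      filter_upwards [h1, hIoc] with ε hε1 hε2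
      have := aux_left ha hb hσ hH0 hH hβ0 hC hTpos hgH' hε2.1 (hsolT ε hε2.1)
        hα htα.le htT hδ hε1.le hsmall
      linarith
    have hXt : X t ≤ δ/2 := le_of_tendsto (hX t (by linarith)) hev
    have hXtpos : 0 < X t := hcomp t ⟨htα, htβ⟩
    rw [Real.dist_eq, sub_zero, abs_of_pos hXtpos]
    linarith
  · -- right endpoint
    refine ⟨?_, hXβ0⟩
    rw [Metric.tendsto_nhdsWithin_nhds]
    intro δ hδ
    set h₂ : ℝ := (δ/(2*(σ*C))) ^ (1/β) with hh₂
    have hh₂pos : 0 < h₂ := Real.rpow_pos_of_pos (by positivity) _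
    set h : ℝ := min (β' - α) (min (δ/2 / (b*M+1)) h₂) with hh
    have hpos : 0 < h := by
      apply lt_min (by linarith)
      exact lt_min (by positivity) hh₂pos
    refine ⟨h, hpos, ?_⟩
    intro t htmem hdist
    rw [Real.dist_eq] at hdist
    have htβ : t < β' := htmem
    have hΔ : β' - t < h := by
      rw [abs_of_neg (by linarith)] at hdist
      linarith
    have htα : α < t := by
      have h1 : h ≤ β' - α := min_le_left _ _
      linarith
    have ht0 : (0:ℝ) ≤ t := by linarith
    -- eventual estimate
    have hev : ∀ᶠ ε in nhdsWithin (0:ℝ) (Set.Ioi 0),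
        Xe ε t ≤ Xe ε β' + b * (M * (β' - t)) + σ * (C * (β' - t) ^ β) := by
      filter_upwards [hIoc] with ε hε
      exact aux_osc ha hb hσ hβ0 hC hTpos hgH' hε.1 (hsolT ε hε.1) (hMb ε hε)
        ht0 htβ.le hβ'T
    have hXt : X t ≤ X β' + b * (M * (β' - t)) + σ * (C * (β' - t) ^ β) := by
      refine le_of_tendsto_of_tendsto (hX t ht0) ?_ hev
      exact ((hX β' (by linarith)).add_const _).add_const _
    rw [hXβ0, zero_add] at hXt
    -- bound the two error terms
    have h1 : b * (M * (β' - t)) < δ/2 := by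
      have h2 : β' - t ≤ δ/2 / (b*M+1) :=
        hΔ.le.trans ((min_le_right _ _).trans (min_le_left _ _))
      have h3 : b * (M * (β' - t)) ≤ (b*M) * (δ/2 / (b*M+1)) := by
        have := mul_le_mul_of_nonneg_left h2 (mul_nonneg hb hM0)
        nlinarith [mul_nonneg hb hM0]
      have h4 : (b*M) * (δ/2 / (b*M+1)) < δ/2 := by
        rw [mul_div_assoc' _ _ _, div_lt_iff₀ (by positivity)]
        nlinarith [mul_nonneg hb hM0]
      linarith
    have h5 : σ * (C * (β' - t) ^ β) ≤ δ/2 := by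
      have h6 : β' - t ≤ h₂ := hΔ.le.trans ((min_le_right _ _).trans (min_le_right _ _))
      have h7 : (β' - t) ^ β ≤ h₂ ^ β := Real.rpow_le_rpow (by linarith) h6 hβ0.le
      have h8 : h₂ ^ β = δ/(2*(σ*C)) := by
        rw [hh₂, one_div, Real.rpow_inv_rpow (by positivity) hβ0.ne']
      have h9 : σ * (C * (β' - t) ^ β) ≤ σ * (C * (δ/(2*(σ*C)))) := by
        rw [← h8]
        exact mul_le_mul_of_nonneg_left (mul_le_mul_of_nonneg_left h7 hC.le) hσ.le
      have h10 : σ * (C * (δ/(2*(σ*C)))) = δ/2 := by field_simp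
      linarith
    have hXtpos : 0 < X t := hcomp t ⟨htα, htβ⟩
    rw [Real.dist_eq, sub_zero, abs_of_pos hXtpos]
    have hsum : b * (M * (β' - t)) + σ * (C * (β' - t) ^ β) < δ/2 + δ/2 :=
      add_lt_add_of_lt_of_le h1 h5
    have : δ/2 + δ/2 = δ := by ring
    rw [this] at hsum
    exact lt_of_le_of_lt hXt hsum
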